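/- Let G be a finite group, let P be a Sylow p-subgroup of G, let N be a normal subgroup of G, and let D be a subgroup of P with D ≤ N that is strongly closed in P with respect to G. Then G = N_G(D)·N, i.e. every element of G is a product of an element of the normalizer of D in G and an element of N. -/

import Mathlib

open Subgroup Pointwise
open scoped commutatorElement

/-- The `p`-core `O_p(G)`: the largest normal `p`-subgroup of `G`. -/
noncomputable def pCore (p : ℕ) (G : Type*) [Group G] : Subgroup G :=
  ⨆ N ∈ {N : Subgroup G | N.Normal ∧ IsPGroup p N}, N

instance centralizer_subgroupOf_normalizer_normal {G : Type*} [Group G] (Q : Subgroup G) :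
    ((Subgroup.centralizer (Q : Set G)).subgroupOf (normalizer (Q : Set G))).Normal :=
  Q.normalizerMonoidHom_ker ▸ Q.normalizerMonoidHom.normal_ker

/-- `G` is `p`-stable: whenever `Q` is a `p`-subgroup, `g ∈ N_G(Q)` and `[Q,g,g] = 1`,
the coset `g C_G(Q)` lies in `O_p(N_G(Q)/C_G(Q))`. -/
def IsPStable (p : ℕ) (G : Type*) [Group G] : Prop :=
  ∀ (Q : Subgroup G), IsPGroup p Q → ∀ (g : G) (hg : g ∈ normalizer (Q : Set G)),
    (∀ q ∈ Q, ⁅⁅q, g⁆, g⁆ = 1) →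
    (QuotientGroup.mk (s := (Subgroup.centralizer (Q : Set G)).subgroupOf (normalizer (Q : Set G)))
        ⟨g, hg⟩) ∈
      pCore p (normalizer (Q : Set G) ⧸ (Subgroup.centralizer (Q : Set G)).subgroupOf (normalizer (Q : Set G)))

/-- `G` is `p`-nilpotent: it has a normal `p`-complement, i.e. a normal subgroup of order
coprime to `p` which is a complement to a Sylow `p`-subgroup. -/
def IsPNilpotent (p : ℕ) (G : Type*) [Group G] : Prop :=
  ∃ N : Subgroup G, N.Normal ∧ (Nat.card N).Coprime p ∧
    ∃ P : Sylow p G, N.IsComplement' P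

/-- `D` is strongly closed in `P` with respect to `G`. -/
def IsStronglyClosed {G : Type*} [Group G] (P D : Subgroup G) : Prop :=
  ∀ U : Set G, U ⊆ (D : Set G) → ∀ g : G,
    (fun u => g⁻¹ * u * g) '' U ⊆ (P : Set G) → (fun u => g⁻¹ * u * g) '' U ⊆ (D : Set G)

open Classical in
/-- `I_𝒜 = ⋂_{A ∈ 𝒜} A`, with the convention that `I_∅` is the trivial subgroup. -/
noncomputable def interA {G : Type*} [Group G] (𝒜 : Set (Subgroup G)) : Subgroup G :=
  if 𝒜 = ∅ then ⊥ else sInf 𝒜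

/-- `𝒜|Q`, the members of `𝒜` contained in `Q`. -/
def restrictA {G : Type*} [Group G] (𝒜 : Set (Subgroup G)) (Q : Subgroup G) :
    Set (Subgroup G) := {A ∈ 𝒜 | A ≤ Q}

/-- `A^b = b⁻¹ A b`. -/
def conjSub {G : Type*} [Group G] (A : Subgroup G) (b : G) : Subgroup G :=
  A.map (MulAut.conj b⁻¹).toMonoidHom

/-- `[A, b]`, the subgroup generated by the commutators `⁅a, b⁆` with `a ∈ A`. -/
def commSub {G : Type*} [Group G] (A : Subgroup G) (b : G) : Subgroup G :=
  Subgroup.closure {x | ∃ a ∈ A, x = ⁅a, b⁆}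

theorem aux_card_sylow_subgroupOf' {p : ℕ} [Fact p.Prime] {G : Type*} [Group G] [Finite G]
    (P : Sylow p G) (N : Subgroup G) [N.Normal] :
    Nat.card ((P : Subgroup G).subgroupOf N) = p ^ (Nat.card N).factorization p := by
  obtain ⟨Q₀⟩ : Nonempty (Sylow p N) := inferInstance
  obtain ⟨S, hS⟩ := Q₀.exists_comap_subtype_eq
  obtain ⟨h, hh⟩ := MulAction.exists_smul_eq G S P
  have hmap : ((S : Subgroup G) ⊓ N).map (MulAut.conj h).toMonoidHom
      = ((P : Subgroup G) ⊓ N) := by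
    rw [Subgroup.map_inf _ _ _ (MulAut.conj h).injective]
    congr 1
    · rw [← hh, Sylow.coe_subgroup_smul]
      rfl
    · show MulAut.conj h • N = N
      exact Subgroup.Normal.conj_smul_eq_self h N
  have c1 : ∀ X : Subgroup G, Nat.card (X.subgroupOf N) = Nat.card (X ⊓ N : Subgroup G) := by
    intro X
    rw [← inf_subgroupOf_right]
    exact Nat.card_congr (subgroupOfEquivOfLe inf_le_right).toEquiv
  have c2 : Nat.card ((S : Subgroup G) ⊓ N : Subgroup G)
      = Nat.card ((P : Subgroup G) ⊓ N : Subgroup G) := by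
    rw [← hmap]
    exact Nat.card_congr (Subgroup.equivMapOfInjective _ (MulAut.conj h).toMonoidHom (fun x y hxy => (MulAut.conj h).injective hxy)).toEquiv
  have c3 : Nat.card ((S : Subgroup G).subgroupOf N) = Nat.card Q₀ := by
    have e : (S : Subgroup G).subgroupOf N = (Q₀ : Subgroup N) := hS
    rw [e]
  rw [c1, ← c2, ← c1, c3]
  exact Q₀.card_eq_multiplicity


/-- If `N` is normal in `G` and `D ≤ N` is a subgroup of `P` strongly closed
in `P` with respect to `G`, then `G = N_G(D)·N`. -/
theorem eq_normalizer_mul_of_stronglyClosed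
    {p : ℕ} (hp : p.Prime) {G : Type*} [Group G] [Finite G]
    (P : Sylow p G) (N : Subgroup G) (hN : N.Normal)
    (D : Subgroup G) (hDP : D ≤ (P : Subgroup G)) (hDN : D ≤ N)
    (hD : IsStronglyClosed (P : Subgroup G) D) :
    ∀ g : G, ∃ x ∈ normalizer (D : Set G), ∃ n ∈ N, g = x * n := by
  haveI : Fact p.Prime := ⟨hp⟩
  haveI := hN
  intro g
  let RP : Sylow p N := Sylow.ofCard ((P : Subgroup G).subgroupOf N)
    (aux_card_sylow_subgroupOf' P N)
  have hRP : (RP : Subgroup N) = (P : Subgroup G).subgroupOf N := rfl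
  set K : Subgroup G := D.map (MulAut.conj g⁻¹).toMonoidHom with hKdef
  have hKN : K ≤ N := by
    rintro _ ⟨d, hd, rfl⟩
    exact hN.conj_mem d (hDN hd) g⁻¹
  have hDpG : IsPGroup p D := P.2.to_le hDP
  have hKp : IsPGroup p K := hDpG.map _
  have hK' : IsPGroup p (K.subgroupOf N) := by
    apply hKp.comap_of_ker_isPGroup
    rw [Subgroup.ker_subtype]
    exact IsPGroup.of_bot
  obtain ⟨R, hR⟩ := hK'.exists_le_sylow
  obtain ⟨n, hn⟩ := MulAction.exists_smul_eq (↥N) R RP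
  set a : G := g * (↑n)⁻¹ with hadef
  have himgP : (fun u => a⁻¹ * u * a) '' (D : Set G) ⊆ (P : Subgroup G) := by
    rintro _ ⟨u, hu, rfl⟩
    have hkK : g⁻¹ * u * g ∈ K := by
      refine ⟨u, hu, ?_⟩
      simp [MulAut.conj_apply]
    have hx : (⟨g⁻¹ * u * g, hKN hkK⟩ : ↥N) ∈ (R : Subgroup N) := hR hkK
    have hsm := Subgroup.smul_mem_pointwise_smul _ (MulAut.conj n) (R : Subgroup N) hx
    have hcoe : (MulAut.conj n • (R : Subgroup N)) = (RP : Subgroup N) := by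
      rw [← Sylow.coe_subgroup_smul, hn]
    rw [hcoe, hRP] at hsm
    have : ((MulAut.conj n (⟨g⁻¹ * u * g, hKN hkK⟩ : ↥N)) : G) ∈ (P : Subgroup G) := hsm
    have heq : ((MulAut.conj n (⟨g⁻¹ * u * g, hKN hkK⟩ : ↥N)) : G)
        = a⁻¹ * u * a := by
      simp [MulAut.conj_apply, hadef, mul_assoc]
    rwa [heq] at this
  have himgD := hD (D : Set G) subset_rfl a himgP
  -- turn into subgroup statement
  have hfun : (fun u : G => a⁻¹ * u * a) = ⇑(MulAut.conj a⁻¹).toMonoidHom := by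
    funext u
    simp [MulAut.conj_apply]
  have hle : D.map (MulAut.conj a⁻¹).toMonoidHom ≤ D := by
    rintro _ ⟨u, hu, rfl⟩
    exact himgD ⟨u, hu, by simp [MulAut.conj_apply, mul_assoc]⟩
  have hcard : Nat.card D ≤ Nat.card (D.map (MulAut.conj a⁻¹).toMonoidHom) :=
    le_of_eq (Nat.card_congr (Subgroup.equivMapOfInjective _ (MulAut.conj a⁻¹).toMonoidHom (fun x y hxy => (MulAut.conj a⁻¹).injective hxy)).toEquiv)
  have heqD : D.map (MulAut.conj a⁻¹).toMonoidHom = D :=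
    Subgroup.eq_of_le_of_card_ge hle hcard
  have haN : a ∈ normalizer (D : Set G) := by
    rw [← Subgroup.inv_mem_iff, mem_normalizer_iff]
    intro h
    have hinj : Function.Injective ⇑(MulAut.conj a⁻¹).toMonoidHom :=
      fun x y hxy => (MulAut.conj a⁻¹).injective hxy
    have h1 : a⁻¹ * h * a⁻¹⁻¹ = (MulAut.conj a⁻¹).toMonoidHom h := by
      simp [MulAut.conj_apply]
    rw [h1]
    constructor
    · intro hh
      have := Subgroup.mem_map_of_mem (MulAut.conj a⁻¹).toMonoidHom hh
      rwa [heqD] at this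
    · intro hh
      rw [← heqD] at hh
      exact (Subgroup.mem_map_iff_mem hinj).mp hh
  exact ⟨a, haN, ↑n, n.2, (inv_mul_cancel_right g ↑n).symm⟩
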